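/- For integers d ≥ 3, i ≥ 2, and n ≥ 1.5(d+1): if there exists a d-decodable matrix with ⌈n/i⌉ columns and m₁ rows and a ⌊d/2⌋-decodable matrix with ⌈n/i⌉ columns and m₂ rows, then there exists a d-decodable matrix with n columns and at most m₁ + i·m₂ rows. In particular m*(n,d) ≤ min over 2 ≤ i ≤ ⌈n/2⌉ of [m*(⌈n/i⌉,d) + i·m*(⌈n/i⌉,⌊d/2⌋)]. -/

import Mathlib

/-- `M` is `d`-decodable: every nonempty set of at most `d` columns contains a
row of weight exactly one. -/
def IsDecodable {m n : ℕ} (M : Fin m → Fin n → Bool) (d : ℕ) : Prop :=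
  ∀ S : Finset (Fin n), S.Nonempty → S.card ≤ d →
    ∃ i : Fin m, (S.filter (fun j => M i j = true)).card = 1

/-- `m*(n,d)`: the minimum number of rows of a `d`-decodable binary matrix with
`n` columns. -/
noncomputable def mStar (n d : ℕ) : ℕ :=
  sInf {m | ∃ M : Fin m → Fin n → Bool, IsDecodable M d}

lemma construct_aux {m₁ m₂ q d : ℕ} (n i : ℕ) (hd : 2 ≤ d) (hq : 0 < q)
    (hni : n ≤ i * q)
    (A : Fin m₁ → Fin q → Bool) (hA : IsDecodable A d)
    (B : Fin m₂ → Fin q → Bool) (hB : IsDecodable B (d / 2)) :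
    ∃ M : Fin (m₁ + i * m₂) → Fin n → Bool, IsDecodable M d := by
  classical
  have hm₂ : 0 < m₂ := by
    obtain ⟨s, -⟩ := hB {⟨0, hq⟩} ⟨_, Finset.mem_singleton_self _⟩
      (by simp; omega)
    exact s.pos
  have hpos : ∀ j : Fin n, j.val % q < q := fun j => Nat.mod_lt _ hq
  set pos : Fin n → Fin q := fun j => ⟨j.val % q, hpos j⟩ with hposdef
  have hblk : ∀ j : Fin n, j.val / q < i := by
    intro j
    rw [Nat.div_lt_iff_lt_mul hq]
    calc (j : ℕ) < n := j.isLt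
      _ ≤ i * q := hni
  set M : Fin (m₁ + i * m₂) → Fin n → Bool := fun r j =>
    if h : r.val < m₁ then A ⟨r.val, h⟩ (pos j)
    else decide (j.val / q = (r.val - m₁) / m₂) &&
      B ⟨(r.val - m₁) % m₂, Nat.mod_lt _ hm₂⟩ (pos j) with hM
  refine ⟨M, ?_⟩
  intro S hS hScard
  -- general block lemma
  have key : ∀ b : ℕ, (S.filter (fun j => j.val / q = b)).Nonempty →
      2 * (S.filter (fun j => j.val / q = b)).card ≤ d →
      ∃ r : Fin (m₁ + i * m₂), (S.filter (fun j => M r j = true)).card = 1 := by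
    intro b hbne hbcard
    set Sb := S.filter (fun j => j.val / q = b) with hSbdef
    have hbi : b < i := by
      obtain ⟨j, hj⟩ := hbne
      have := hblk j
      have hb : j.val / q = b := (Finset.mem_filter.mp hj).2
      omega
    have hinj : Set.InjOn pos Sb := by
      intro a ha c hc hac
      have h1 : a.val / q = b := (Finset.mem_filter.mp ha).2
      have h2 : c.val / q = b := (Finset.mem_filter.mp hc).2
      have h3 : a.val % q = c.val % q := congrArg Fin.val hac
      have h4 := Nat.div_add_mod a.val q
      have h5 := Nat.div_add_mod c.val q
      exact Fin.ext (by rw [← h4, ← h5, h1, h2, h3])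
    have hcard' : (Sb.image pos).card ≤ d / 2 := by
      rw [Finset.card_image_of_injOn hinj]
      omega
    obtain ⟨s, hs⟩ := hB (Sb.image pos) (hbne.image _) hcard'
    have hrow : m₁ + (b * m₂ + s.val) < m₁ + i * m₂ := by
      have h1 : b * m₂ + s.val < (b + 1) * m₂ := by
        have := s.isLt; rw [add_mul, one_mul]; omega
      have h2 : (b + 1) * m₂ ≤ i * m₂ := Nat.mul_le_mul_right _ (by omega)
      omega
    refine ⟨⟨m₁ + (b * m₂ + s.val), hrow⟩, ?_⟩
    have hval : ∀ j : Fin n, M ⟨m₁ + (b * m₂ + s.val), hrow⟩ j =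
        (decide (j.val / q = b) && B s (pos j)) := by
      intro j
      have hnlt : ¬ (m₁ + (b * m₂ + s.val) < m₁) := by omega
      have hsub : m₁ + (b * m₂ + s.val) - m₁ = s.val + m₂ * b := by
        rw [mul_comm]; omega
      have hdiv : (s.val + m₂ * b) / m₂ = b := by
        rw [Nat.add_mul_div_left _ _ hm₂, Nat.div_eq_of_lt s.isLt, zero_add]
      have hmod : (s.val + m₂ * b) % m₂ = s.val := by
        rw [Nat.add_mul_mod_self_left, Nat.mod_eq_of_lt s.isLt]
      simp only [hM, dif_neg hnlt, hsub, hdiv, hmod]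
    have hfe : (S.filter (fun j => M ⟨m₁ + (b * m₂ + s.val), hrow⟩ j = true)) =
        Sb.filter (fun j => B s (pos j) = true) := by
      ext j
      simp only [Finset.mem_filter, hSbdef, hval, Bool.and_eq_true, decide_eq_true_eq]
      tauto
    rw [hfe]
    have himg : (Sb.image pos).filter (fun t => B s t = true) =
        (Sb.filter (fun j => B s (pos j) = true)).image pos :=
      Finset.filter_image
    rw [← Finset.card_image_of_injOn (hinj.mono (Finset.filter_subset _ _)),
      ← himg]
    exact hs
  by_cases hsingle : ∀ j₁ ∈ S, ∀ j₂ ∈ S, j₁.val / q = j₂.val / q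
  · -- single block: use A rows
    have hinj : Set.InjOn pos S := by
      intro a ha c hc hac
      have h1 := hsingle a ha c hc
      have h3 : a.val % q = c.val % q := congrArg Fin.val hac
      have h4 := Nat.div_add_mod a.val q
      have h5 := Nat.div_add_mod c.val q
      exact Fin.ext (by rw [← h4, ← h5, h1, h3])
    obtain ⟨r, hr⟩ := hA (S.image pos) (hS.image _)
      (by rw [Finset.card_image_of_injOn hinj]; exact hScard)
    have hrlt : r.val < m₁ + i * m₂ := by have := r.isLt; omega
    refine ⟨⟨r.val, hrlt⟩, ?_⟩
    have hval : ∀ j : Fin n, M ⟨r.val, hrlt⟩ j = A r (pos j) := by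
      intro j; simp only [hM, dif_pos r.isLt]
    have hfe : (S.filter (fun j => M ⟨r.val, hrlt⟩ j = true)) =
        S.filter (fun j => A r (pos j) = true) := by
      ext j; simp [hval]
    rw [hfe]
    have himg : (S.image pos).filter (fun t => A r t = true) =
        (S.filter (fun j => A r (pos j) = true)).image pos :=
      Finset.filter_image
    rw [← Finset.card_image_of_injOn (hinj.mono (Finset.filter_subset _ _)),
      ← himg]
    exact hr
  · -- at least two blocks
    push_neg at hsingle
    obtain ⟨j₁, hj₁, j₂, hj₂, hne⟩ := hsingle
    set b₁ := j₁.val / q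
    set b₂ := j₂.val / q
    have hmem₁ : j₁ ∈ S.filter (fun j => j.val / q = b₁) := by
      simp [Finset.mem_filter, hj₁]
      rfl
    have hmem₂ : j₂ ∈ S.filter (fun j => j.val / q = b₂) := by
      simp [Finset.mem_filter, hj₂]
      rfl
    have hdisj : Disjoint (S.filter (fun j => j.val / q = b₁))
        (S.filter (fun j => j.val / q = b₂)) := by
      rw [Finset.disjoint_left]
      intro a ha hb
      exact hne ((Finset.mem_filter.mp ha).2 ▸ (Finset.mem_filter.mp hb).2.symm ▸ rfl)
    have hsum : (S.filter (fun j => j.val / q = b₁)).card +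
        (S.filter (fun j => j.val / q = b₂)).card ≤ d := by
      rw [← Finset.card_union_of_disjoint hdisj]
      refine le_trans (Finset.card_le_card ?_) hScard
      intro x hx
      rcases Finset.mem_union.mp hx with h | h
      exacts [(Finset.mem_filter.mp h).1, (Finset.mem_filter.mp h).1]
    rcases le_total (S.filter (fun j => j.val / q = b₁)).card
        (S.filter (fun j => j.val / q = b₂)).card with h | h
    · exact key b₁ ⟨j₁, hmem₁⟩ (by omega)
    · exact key b₂ ⟨j₂, hmem₂⟩ (by omega)

theorem recursive_construction (n d : ℕ) (hd : 3 ≤ d) (hn : 3 * (d + 1) ≤ 2 * n) :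
    (∀ i m₁ m₂ : ℕ, 2 ≤ i →
      ∀ A : Fin m₁ → Fin ((n + i - 1) / i) → Bool, IsDecodable A d →
      ∀ B : Fin m₂ → Fin ((n + i - 1) / i) → Bool, IsDecodable B (d / 2) →
        ∃ m ≤ m₁ + i * m₂, ∃ M : Fin m → Fin n → Bool, IsDecodable M d) ∧
    (∀ i : ℕ, 2 ≤ i → i ≤ (n + 1) / 2 →
      mStar n d ≤ mStar ((n + i - 1) / i) d + i * mStar ((n + i - 1) / i) (d / 2)) := by
  have hn6 : 6 ≤ n := by omega
  have part1 : ∀ i m₁ m₂ : ℕ, 2 ≤ i →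
      ∀ A : Fin m₁ → Fin ((n + i - 1) / i) → Bool, IsDecodable A d →
      ∀ B : Fin m₂ → Fin ((n + i - 1) / i) → Bool, IsDecodable B (d / 2) →
        ∃ m ≤ m₁ + i * m₂, ∃ M : Fin m → Fin n → Bool, IsDecodable M d := by
    intro i m₁ m₂ hi A hA B hB
    have hipos : 0 < i := by omega
    have hq : 0 < (n + i - 1) / i := Nat.div_pos (by omega) hipos
    have hni : n ≤ i * ((n + i - 1) / i) := by
      have h1 := Nat.div_add_mod (n + i - 1) i
      have h2 : (n + i - 1) % i < i := Nat.mod_lt _ hipos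
      obtain ⟨w, hw⟩ : ∃ w, w = i * ((n + i - 1) / i) := ⟨_, rfl⟩
      rw [← hw]
      omega
    obtain ⟨M, hM⟩ := construct_aux n i (by omega) hq hni A hA B hB
    exact ⟨m₁ + i * m₂, le_rfl, M, hM⟩
  refine ⟨part1, ?_⟩
  intro i hi _
  have hne : ∀ k d' : ℕ, 0 < k →
      {m | ∃ M : Fin m → Fin k → Bool, IsDecodable M d'}.Nonempty := by
    intro k d' hk
    refine ⟨k, fun r j => decide (r.val = j.val), ?_⟩
    intro S hS _
    obtain ⟨j, hj⟩ := hS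
    refine ⟨⟨j.val, j.isLt⟩, ?_⟩
    rw [Finset.card_eq_one]
    refine ⟨j, ?_⟩
    ext x
    simp only [Finset.mem_filter, decide_eq_true_eq, Finset.mem_singleton]
    constructor
    · rintro ⟨-, h⟩; exact (Fin.ext h.symm)
    · rintro rfl; exact ⟨hj, rfl⟩
  have hipos : 0 < i := by omega
  have hq : 0 < (n + i - 1) / i := Nat.div_pos (by omega) hipos
  obtain ⟨A, hA⟩ : mStar ((n + i - 1) / i) d ∈
      {m | ∃ M : Fin m → Fin ((n + i - 1) / i) → Bool, IsDecodable M d} :=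
    Nat.sInf_mem (hne _ _ hq)
  obtain ⟨B, hB⟩ : mStar ((n + i - 1) / i) (d / 2) ∈
      {m | ∃ M : Fin m → Fin ((n + i - 1) / i) → Bool, IsDecodable M (d / 2)} :=
    Nat.sInf_mem (hne _ _ hq)
  obtain ⟨m, hm, M, hM⟩ := part1 i _ _ hi A hA B hB
  exact le_trans (Nat.sInf_le ⟨M, hM⟩) hm
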